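/- Let ≤ be a monomial well-order on FreeMagma E and let I be a two-sided ideal of A. Then T(I) is a two-sided ideal of the magma FreeMagma E: if m ∈ T(I) then z·m ∈ T(I) and m·z ∈ T(I) for every z ∈ FreeMagma E. -/

import Mathlib

/-- The monomial corresponding to an element of the free magma, inside the free
non-unital non-associative algebra. -/
noncomputable def magmaMonomial {E : Type*} (z : FreeMagma E) :
    FreeNonUnitalNonAssocAlgebra ℚ E :=
  MonoidAlgebra.single z (1 : ℚ)

/-- A ℚ-submodule of the magma algebra which is stable under left and right
multiplication by arbitrary elements: a two-sided ideal. -/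
def IsTwoSidedIdealSubmodule {E : Type*}
    (I : Submodule ℚ (FreeNonUnitalNonAssocAlgebra ℚ E)) : Prop :=
  ∀ a x : FreeNonUnitalNonAssocAlgebra ℚ E, x ∈ I → a * x ∈ I ∧ x * a ∈ I

/-- The maximal term `T f` of a nonzero element `f` of the magma algebra: the largest
monomial in its support, with respect to a given linear order on the free magma. -/
noncomputable def maxTerm {E : Type*} [LinearOrder (FreeMagma E)]
    (f : FreeNonUnitalNonAssocAlgebra ℚ E) (hf : f ≠ 0) : FreeMagma E :=
  f.coeff.support.max' (Finsupp.support_nonempty_iff.mpr (mt MonoidAlgebra.coeff_eq_zero.mp hf))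

/-- `T I`: the set of maximal terms of nonzero elements of `I`. -/
def maxTermSet {E : Type*} [LinearOrder (FreeMagma E)]
    (I : Submodule ℚ (FreeNonUnitalNonAssocAlgebra ℚ E)) : Set (FreeMagma E) :=
  {z | ∃ (f : FreeNonUnitalNonAssocAlgebra ℚ E) (hf : f ≠ 0), f ∈ I ∧ maxTerm f hf = z}

/-- `O I`: the complement of `T I` in the free magma. -/
def outTermSet {E : Type*} [LinearOrder (FreeMagma E)]
    (I : Submodule ℚ (FreeNonUnitalNonAssocAlgebra ℚ E)) : Set (FreeMagma E) :=
  (maxTermSet I)ᶜ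


lemma aux_single_mul {E : Type*} (z : FreeMagma E)
    (f : FreeNonUnitalNonAssocAlgebra ℚ E) :
    (MonoidAlgebra.single z (1:ℚ)) * f = MonoidAlgebra.mapDomain (z * ·) f := by
  classical
  induction f using MonoidAlgebra.induction with
  | zero => simp
  | single_add a b f _ _ ih =>
    rw [mul_add, MonoidAlgebra.mapDomain_add, ih]
    congr 1
    rw [MonoidAlgebra.single_mul_single, MonoidAlgebra.mapDomain_single]
    simp

lemma aux_mul_single {E : Type*} (z : FreeMagma E)
    (f : FreeNonUnitalNonAssocAlgebra ℚ E) :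
    f * (MonoidAlgebra.single z (1:ℚ)) = MonoidAlgebra.mapDomain (· * z) f := by
  classical
  induction f using MonoidAlgebra.induction with
  | zero => simp
  | single_add a b f _ _ ih =>
    rw [add_mul, MonoidAlgebra.mapDomain_add, ih]
    congr 1
    rw [MonoidAlgebra.single_mul_single, MonoidAlgebra.mapDomain_single]
    simp

lemma aux_maxTerm_mapDomain {E : Type*} [LinearOrder (FreeMagma E)]
    {φ : FreeMagma E → FreeMagma E} (hφ : StrictMono φ)
    (f : FreeNonUnitalNonAssocAlgebra ℚ E) (hf : f ≠ 0)
    (hg : MonoidAlgebra.mapDomain φ f ≠ 0) :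
    maxTerm (MonoidAlgebra.mapDomain φ f) hg = φ (maxTerm f hf) := by
  classical
  unfold maxTerm
  apply le_antisymm
  · apply Finset.max'_le
    intro y hy
    obtain ⟨a, ha, rfl⟩ := Finset.mem_image.mp (Finsupp.mapDomain_support hy)
    exact hφ.monotone (Finset.le_max' _ _ ha)
  · apply Finset.le_max'
    rw [Finsupp.mem_support_iff, MonoidAlgebra.mapDomain, MonoidAlgebra.coeff_ofCoeff,
      Finsupp.mapDomain_apply hφ.injective]
    exact Finsupp.mem_support_iff.mp (Finset.max'_mem _ _)

lemma maxTerm_congr {E : Type*} [LinearOrder (FreeMagma E)]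
    {f g : FreeNonUnitalNonAssocAlgebra ℚ E} (h : f = g) (hf : f ≠ 0) (hg : g ≠ 0) :
    maxTerm f hf = maxTerm g hg := by subst h; rfl

/-- For a monomial well-order on the free magma and a two-sided ideal `I` of the magma
algebra, the set `T(I)` of maximal terms of nonzero elements of `I` is a two-sided
ideal of the free magma. -/
theorem maxTermSet_is_magma_ideal (E : Type*) [LinearOrder (FreeMagma E)]
    (hmono : ∀ x y z : FreeMagma E, x < y → x * z < y * z ∧ z * x < z * y)
    (hwell : ∀ S : Set (FreeMagma E), S.Nonempty → ∃ m ∈ S, ∀ x ∈ S, m ≤ x)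
    (I : Submodule ℚ (FreeNonUnitalNonAssocAlgebra ℚ E))
    (hI : IsTwoSidedIdealSubmodule I) :
    ∀ m ∈ maxTermSet I, ∀ z : FreeMagma E,
      z * m ∈ maxTermSet I ∧ m * z ∈ maxTermSet I := by
  rintro m ⟨f, hf, hfI, rfl⟩ z
  constructor
  · have hmul : StrictMono (fun x : FreeMagma E => z * x) :=
      fun x y h => (hmono x y z h).2
    have hne : MonoidAlgebra.mapDomain (fun x => z * x) f ≠ 0 :=
      fun h => hf (MonoidAlgebra.mapDomain_injective hmul.injective (by simpa using h))
    refine ⟨magmaMonomial z * f, (aux_single_mul z f) ▸ hne,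
      (hI (magmaMonomial z) f hfI).1, ?_⟩
    exact (maxTerm_congr (aux_single_mul z f) _ hne).trans
      (aux_maxTerm_mapDomain hmul f hf hne)
  · have hmul : StrictMono (fun x : FreeMagma E => x * z) :=
      fun x y h => (hmono x y z h).1
    have hne : MonoidAlgebra.mapDomain (fun x => x * z) f ≠ 0 :=
      fun h => hf (MonoidAlgebra.mapDomain_injective hmul.injective (by simpa using h))
    refine ⟨f * magmaMonomial z, (aux_mul_single z f) ▸ hne,
      (hI (magmaMonomial z) f hfI).2, ?_⟩
    exact (maxTerm_congr (aux_mul_single z f) _ hne).trans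
      (aux_maxTerm_mapDomain hmul f hf hne)
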